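/- Let (C, N, (A_i)_{i∈N}, k) be an approval election with n = |N|, k ≥ 1, and (k+1) dividing n. Let (W, π) be a Droop valid assignment whose Monroe score is maximal among all Droop valid assignments for this election. If S ⊆ N is a group with |S| > n/(k+1) such that π(i) ∉ A_i for every i ∈ S, then ⋂_{i∈S} A_i ⊆ W. -/

import Mathlib

/-- Suppose `(k+1) ∣ n` and `(W, π)` is a Droop valid assignment
(`W ⊆ C`, `|W| = k`, `π : N → W ∪ {d}` with every preimage class—including that
of the dummy candidate `d ∉ C`—of size exactly `n/(k+1)`) whose Monroe score is
maximal among all Droop valid assignments.  If `S ⊆ N` satisfies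
`|S| > n/(k+1)` and `π(i) ∉ A_i` for every `i ∈ S`, then `⋂_{i∈S} A_i ⊆ W`. -/
theorem stmt_6 {V K : Type*} [DecidableEq V] [DecidableEq K]
    (N : Finset V) (C : Finset K) (A : V → Finset K) (k : ℕ)
    (hA : ∀ i ∈ N, A i ⊆ C) (hk : 1 ≤ k) (hdvd : (k + 1) ∣ N.card)
    (d : K) (hd : d ∉ C)
    (W : Finset K) (π : V → K)
    (hWC : W ⊆ C) (hWcard : W.card = k)
    (hπ : ∀ i ∈ N, π i ∈ insert d W)
    (hquota : ∀ c ∈ W, (N.filter (fun i => π i = c)).card = N.card / (k + 1))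
    (hdummy : (N.filter (fun i => π i = d)).card = N.card / (k + 1))
    (hmax : ∀ (W' : Finset K) (π' : V → K), W' ⊆ C → W'.card = k →
      (∀ i ∈ N, π' i ∈ insert d W') →
      (∀ c ∈ W', (N.filter (fun i => π' i = c)).card = N.card / (k + 1)) →
      (N.filter (fun i => π' i = d)).card = N.card / (k + 1) →
      (N.filter (fun i => π' i ∈ A i)).card ≤ (N.filter (fun i => π i ∈ A i)).card)
    (S : Finset V) (hSN : S ⊆ N)
    (hSsize : (S.card : ℚ) > (N.card : ℚ) / ((k : ℚ) + 1))
    (hunhappy : ∀ i ∈ S, π i ∉ A i) :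
    ∀ c, (∀ i ∈ S, c ∈ A i) → c ∈ W := by
  intro c hc
  by_contra hcW
  obtain ⟨q, hnq⟩ := hdvd
  have hk1 : 0 < k + 1 := Nat.succ_pos k
  have hqd : N.card / (k + 1) = q := by rw [hnq, Nat.mul_div_cancel_left _ hk1]
  rw [hqd] at hquota hdummy
  have hSq : q < S.card := by
    have hne : ((k : ℚ) + 1) ≠ 0 := by positivity
    have hq : ((N.card : ℚ)) / ((k : ℚ) + 1) = (q : ℚ) := by
      rw [hnq]; push_cast; field_simp
    rw [hq] at hSsize
    exact_mod_cast hSsize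
  -- find a voter in S not assigned to the dummy
  have hi0ex : ∃ i ∈ S, π i ≠ d := by
    by_contra h
    push_neg at h
    have hsub : S ⊆ N.filter (fun i => π i = d) := fun i hi =>
      Finset.mem_filter.mpr ⟨hSN hi, h i hi⟩
    have := Finset.card_le_card hsub
    omega
  obtain ⟨i0, hi0S, hi0d⟩ := hi0ex
  have hi0N : i0 ∈ N := hSN hi0S
  set w := π i0 with hw
  have hwW : w ∈ W := by
    rcases Finset.mem_insert.mp (hπ i0 hi0N) with h | h
    · exact absurd h hi0d
    · exact h
  have hq1 : 1 ≤ q := by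
    rcases Nat.eq_zero_or_pos q with rfl | h
    · rw [Nat.mul_zero] at hnq
      have := Finset.card_pos.mpr ⟨i0, hi0N⟩
      omega
    · exact h
  have hcC : c ∈ C := hA i0 hi0N (hc i0 hi0S)
  have hcd : c ≠ d := fun h => hd (h ▸ hcC)
  have hwd : w ≠ d := hi0d
  have hcw : c ≠ w := fun h => hcW (h ▸ hwW)
  -- class of w
  set Wc := N.filter (fun i => π i = w) with hWcdef
  have hWcq : Wc.card = q := hquota w hwW
  have hi0Wc : i0 ∈ Wc := Finset.mem_filter.mpr ⟨hi0N, rfl⟩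
  have hWcN : Wc ⊆ N := Finset.filter_subset _ _
  -- choose T ⊆ S with |T| = q containing i0
  obtain ⟨T', hT'sub, hT'card⟩ := Finset.exists_subset_card_eq (s := S.erase i0) (n := q - 1)
    (by have := Finset.card_erase_of_mem hi0S; omega)
  have hi0T' : i0 ∉ T' := fun h => (Finset.mem_erase.mp (hT'sub h)).1 rfl
  set T := insert i0 T' with hTdef
  have hTcard : T.card = q := by
    rw [hTdef, Finset.card_insert_of_notMem hi0T', hT'card]; omega
  have hTS : T ⊆ S :=
    Finset.insert_subset hi0S (hT'sub.trans (Finset.erase_subset _ _))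
  have hTN : T ⊆ N := hTS.trans hSN
  have hi0T : i0 ∈ T := Finset.mem_insert_self _ _
  -- the exchange sets
  set E := T \ Wc with hEdef
  set F := Wc \ T with hFdef
  have hEF : E.card = F.card := by
    have h1 := Finset.card_sdiff_add_card_inter T Wc
    have h2 := Finset.card_sdiff_add_card_inter Wc T
    rw [Finset.inter_comm] at h2
    rw [← hEdef] at h1
    rw [← hFdef] at h2
    omega
  have hEN : E ⊆ N := (Finset.sdiff_subset).trans hTN
  have hFN : F ⊆ N := (Finset.sdiff_subset).trans hWcN
  have hdisjEF : ∀ i, i ∈ E → i ∉ F := by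
    intro i hiE hiF
    exact (Finset.mem_sdiff.mp hiF).2 (Finset.mem_sdiff.mp hiE).1
  -- the swap involution g
  obtain ⟨g, hgg, hgE, hgF, hgid⟩ :
      ∃ g : V → V, (∀ i, g (g i) = i) ∧ (∀ i ∈ E, g i ∈ F) ∧ (∀ i ∈ F, g i ∈ E) ∧
        (∀ i, i ∉ E → i ∉ F → g i = i) := by
    have e := Finset.equivOfCardEq hEF
    refine ⟨fun i => if h : i ∈ E then (e ⟨i, h⟩ : V) else
      if h : i ∈ F then (e.symm ⟨i, h⟩ : V) else i, ?_, ?_, ?_, ?_⟩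
    · intro i
      by_cases hE : i ∈ E
      · have h1 : (e ⟨i, hE⟩ : V) ∈ F := (e ⟨i, hE⟩).2
        simp only [dif_pos hE]
        rw [dif_neg (fun h => hdisjEF _ h h1), dif_pos h1, Subtype.coe_eta,
          Equiv.symm_apply_apply]
      · by_cases hF : i ∈ F
        · have h1 : (e.symm ⟨i, hF⟩ : V) ∈ E := (e.symm ⟨i, hF⟩).2
          simp only [dif_neg hE, dif_pos hF]
          rw [dif_pos h1, Subtype.coe_eta, Equiv.apply_symm_apply]
        · simp only [dif_neg hE, dif_neg hF]
    · intro i hiE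
      simp only [dif_pos hiE]
      exact (e ⟨i, hiE⟩).2
    · intro i hiF
      have hiE : i ∉ E := fun h => hdisjEF _ h hiF
      simp only [dif_neg hiE, dif_pos hiF]
      exact (e.symm ⟨i, hiF⟩).2
    · intro i hE hF
      simp only [dif_neg hE, dif_neg hF]
  have hginj : Function.Injective g := fun a b h => by
    rw [← hgg a, h, hgg]
  have hgN : ∀ i ∈ N, g i ∈ N := by
    intro i hi
    by_cases hE : i ∈ E
    · exact hFN (hgE i hE)
    · by_cases hF : i ∈ F
      · exact hEN (hgF i hF)
      · rw [hgid i hE hF]; exact hi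
  -- counting via the involution
  have hcount : ∀ y, (N.filter fun i => π (g i) = y).card =
      (N.filter fun i => π i = y).card := by
    intro y
    apply Finset.card_nbij (i := g)
    · intro a ha
      rw [Finset.mem_coe, Finset.mem_filter] at ha ⊢
      exact ⟨hgN a ha.1, ha.2⟩
    · intro a _ b _ h
      exact hginj h
    · intro b hb
      simp only [Finset.coe_filter, Set.mem_setOf_eq] at hb ⊢
      exact ⟨g b, ⟨hgN b hb.1, by rw [hgg]; exact hb.2⟩, hgg b⟩
  -- the new assignment
  obtain ⟨f, hf⟩ : ∃ f : V → K, ∀ i, f i = if π (g i) = w then c else π (g i) :=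
    ⟨_, fun _ => rfl⟩
  set W' := insert c (W.erase w) with hW'def
  have hcW'e : c ∉ W.erase w := fun h => hcW (Finset.mem_of_mem_erase h)
  have hW'C : W' ⊆ C :=
    Finset.insert_subset hcC ((Finset.erase_subset _ _).trans hWC)
  have hW'card : W'.card = k := by
    rw [hW'def, Finset.card_insert_of_notMem hcW'e, Finset.card_erase_of_mem hwW]
    omega
  have hπ' : ∀ i ∈ N, f i ∈ insert d W' := by
    intro i hi
    rw [hf]
    by_cases h : π (g i) = w
    · rw [if_pos h]
      exact Finset.mem_insert.mpr (Or.inr (Finset.mem_insert_self _ _))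
    · rw [if_neg h]
      rcases Finset.mem_insert.mp (hπ (g i) (hgN i hi)) with h2 | h2
      · exact Finset.mem_insert.mpr (Or.inl h2)
      · exact Finset.mem_insert.mpr (Or.inr (Finset.mem_insert.mpr
          (Or.inr (Finset.mem_erase.mpr ⟨h, h2⟩))))
  have hfc : N.filter (fun i => f i = c) = N.filter (fun i => π (g i) = w) := by
    apply Finset.filter_congr
    intro i hi
    rw [hf]
    constructor
    · intro h
      by_cases h2 : π (g i) = w
      · exact h2
      · rw [if_neg h2] at h
        rcases Finset.mem_insert.mp (hπ (g i) (hgN i hi)) with h3 | h3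
        · exact absurd (h ▸ h3) hcd
        · exact absurd (h ▸ h3) hcW
    · intro h
      rw [if_pos h]
  have hfx : ∀ x, x ≠ c → x ≠ w →
      N.filter (fun i => f i = x) = N.filter (fun i => π (g i) = x) := by
    intro x hxc hxw
    apply Finset.filter_congr
    intro i _
    rw [hf]
    constructor
    · intro h
      by_cases h2 : π (g i) = w
      · rw [if_pos h2] at h
        exact absurd h.symm hxc
      · rwa [if_neg h2] at h
    · intro h
      rw [if_neg (h ▸ hxw ∘ Eq.symm ∘ Eq.symm), h]
  have hquota' : ∀ x ∈ W', (N.filter (fun i => f i = x)).card = N.card / (k + 1) := by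
    intro x hx
    rw [hqd]
    rcases Finset.mem_insert.mp hx with rfl | hx
    · rw [hfc, hcount, hquota w hwW]
    · obtain ⟨hxw, hxW⟩ := Finset.mem_erase.mp hx
      rw [hfx x (fun h => hcW (h ▸ hxW)) hxw, hcount, hquota x hxW]
  have hdummy' : (N.filter (fun i => f i = d)).card = N.card / (k + 1) := by
    rw [hqd, hfx d (Ne.symm hcd) (Ne.symm hwd), hcount, hdummy]
  have hkey := hmax W' f hW'C hW'card hπ' hquota' hdummy'
  -- now show the new score is strictly larger
  set Hold := N.filter (fun i => π i ∈ A i) with hHold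
  set Hnew := N.filter (fun i => f i ∈ A i) with hHnew
  have hsub1 : (Hold \ (T ∪ F)) ∪ T ⊆ Hnew := by
    apply Finset.union_subset
    · intro i hi
      obtain ⟨hiH, hiU⟩ := Finset.mem_sdiff.mp hi
      obtain ⟨hiN, hiA⟩ := Finset.mem_filter.mp hiH
      have hiT : i ∉ T := fun h => hiU (Finset.mem_union_left _ h)
      have hiF : i ∉ F := fun h => hiU (Finset.mem_union_right _ h)
      have hiE : i ∉ E := fun h => hiT (Finset.mem_sdiff.mp h).1
      have hgi : g i = i := hgid i hiE hiF
      have hiWc : i ∉ Wc := fun h => hiF (Finset.mem_sdiff.mpr ⟨h, hiT⟩)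
      have hπw : π i ≠ w := fun h => hiWc (Finset.mem_filter.mpr ⟨hiN, h⟩)
      refine Finset.mem_filter.mpr ⟨hiN, ?_⟩
      rw [hf, hgi, if_neg hπw]
      exact hiA
    · intro i hiT
      have hiN : i ∈ N := hTN hiT
      have hcA : c ∈ A i := hc i (hTS hiT)
      refine Finset.mem_filter.mpr ⟨hiN, ?_⟩
      by_cases hE : i ∈ E
      · have hgiF : g i ∈ F := hgE i hE
        have : π (g i) = w := (Finset.mem_filter.mp (Finset.mem_sdiff.mp hgiF).1).2
        rw [hf, if_pos this]
        exact hcA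
      · have hiWc : i ∈ Wc := by
          by_contra h
          exact hE (Finset.mem_sdiff.mpr ⟨hiT, h⟩)
        have hiF : i ∉ F := fun h => (Finset.mem_sdiff.mp h).2 hiT
        have hgi : g i = i := hgid i hE hiF
        have : π i = w := (Finset.mem_filter.mp hiWc).2
        rw [hf, hgi, if_pos this]
        exact hcA
  have hdisj1 : Disjoint (Hold \ (T ∪ F)) T := by
    rw [Finset.disjoint_left]
    intro i hi hiT
    exact (Finset.mem_sdiff.mp hi).2 (Finset.mem_union_left _ hiT)
  have h1 : (Hold \ (T ∪ F)).card + q ≤ Hnew.card := by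
    have := Finset.card_le_card hsub1
    rw [Finset.card_union_of_disjoint hdisj1, hTcard] at this
    exact this
  have h2 : Hold.card = (Hold \ (T ∪ F)).card + (Hold ∩ (T ∪ F)).card :=
    (Finset.card_sdiff_add_card_inter _ _).symm
  have h3 : Hold ∩ (T ∪ F) ⊆ F := by
    intro i hi
    obtain ⟨hiH, hiU⟩ := Finset.mem_inter.mp hi
    rcases Finset.mem_union.mp hiU with h | h
    · exact absurd (Finset.mem_filter.mp hiH).2 (hunhappy i (hTS h))
    · exact h
  have h4 : F.card ≤ q - 1 := by
    have hFsub : F ⊆ Wc.erase i0 := by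
      intro i hi
      obtain ⟨hiWc, hiT⟩ := Finset.mem_sdiff.mp hi
      exact Finset.mem_erase.mpr ⟨fun h => hiT (h ▸ hi0T), hiWc⟩
    have := Finset.card_le_card hFsub
    rw [Finset.card_erase_of_mem hi0Wc, hWcq] at this
    exact this
  have h5 := Finset.card_le_card h3
  omega
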